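/- Let d ≥ 2 and let i₁, i₂, j₁, j₂, i₁', i₂', j₁', j₂' ∈ Fin d. Then ∫ U, U(i₁,j₁) · U(i₂,j₂) · conj(U(i₁',j₁')) · conj(U(i₂',j₂')) dμ_d = (δ_{i₁ i₁'} δ_{i₂ i₂'} δ_{j₁ j₁'} δ_{j₂ j₂'} + δ_{i₁ i₂'} δ_{i₂ i₁'} δ_{j₁ j₂'} δ_{j₂ j₁'}) / (d² − 1) − (δ_{i₁ i₁'} δ_{i₂ i₂'} δ_{j₁ j₂'} δ_{j₂ j₁'} + δ_{i₁ i₂'} δ_{i₂ i₁'} δ_{j₁ j₁'} δ_{j₂ j₂'}) / (d(d² − 1)), where δ_{xy} is 1 if x = y and 0 otherwise. -/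

import Mathlib

open MeasureTheory Matrix
open scoped ComplexConjugate

noncomputable section

local instance {d : ℕ} : MeasurableSpace (Matrix.unitaryGroup (Fin d) ℂ) := borel _

/-- Kronecker delta, valued in `ℂ`. -/
def kdelta {α : Type*} [DecidableEq α] (x y : α) : ℂ := if x = y then 1 else 0

local instance {d : ℕ} : BorelSpace (Matrix.unitaryGroup (Fin d) ℂ) := ⟨rfl⟩

namespace WgAux

variable {d : ℕ}

local instance : ContinuousMul (Matrix.unitaryGroup (Fin d) ℂ) := by
  constructor
  apply continuous_induced_rng.mpr
  exact (continuous_subtype_val.comp continuous_fst).matrix_mul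
    (continuous_subtype_val.comp continuous_snd)

local instance : ContinuousInv (Matrix.unitaryGroup (Fin d) ℂ) := by
  constructor
  apply continuous_induced_rng.mpr
  have : Continuous fun U : Matrix.unitaryGroup (Fin d) ℂ =>
      star (U : Matrix (Fin d) (Fin d) ℂ) :=
    continuous_subtype_val.matrix_conjTranspose
  exact this

local instance : IsTopologicalGroup (Matrix.unitaryGroup (Fin d) ℂ) := ⟨⟩

theorem unitary_isCompact :
    IsCompact ((Matrix.unitaryGroup (Fin d) ℂ) : Set (Matrix (Fin d) (Fin d) ℂ)) := by
  have hpi : IsCompact (Set.pi Set.univ fun _ : Fin d =>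
      (Set.pi Set.univ fun _ : Fin d => Metric.closedBall (0:ℂ) 1)) :=
    isCompact_univ_pi fun i => isCompact_univ_pi fun j => isCompact_closedBall _ _
  apply hpi.of_isClosed_subset
  · have h1 : IsClosed {A : Matrix (Fin d) (Fin d) ℂ | star A * A = 1} :=
      isClosed_singleton.preimage (Continuous.matrix_mul
        (continuous_id.matrix_conjTranspose) continuous_id)
    have h2 : IsClosed {A : Matrix (Fin d) (Fin d) ℂ | A * star A = 1} :=
      isClosed_singleton.preimage (Continuous.matrix_mul
        continuous_id (continuous_id.matrix_conjTranspose))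
    have : ((Matrix.unitaryGroup (Fin d) ℂ) : Set (Matrix (Fin d) (Fin d) ℂ))
        = {A | star A * A = 1} ∩ {A | A * star A = 1} := by
      ext A; exact ⟨fun h => ⟨h.1, h.2⟩, fun h => ⟨h.1, h.2⟩⟩
    rw [this]; exact h1.inter h2
  · intro A hA i _ j _
    simpa using entry_norm_bound_of_unitary hA i j

local instance : CompactSpace (Matrix.unitaryGroup (Fin d) ℂ) :=
  isCompact_iff_compactSpace.mp unitary_isCompact

theorem rightInv (μ : Measure (Matrix.unitaryGroup (Fin d) ℂ))
    [μ.IsHaarMeasure] [IsProbabilityMeasure μ] : μ.IsMulRightInvariant := by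
  constructor
  intro g
  set ν := Measure.map (· * g) μ with hν
  have hmg : Measurable (· * g : Matrix.unitaryGroup (Fin d) ℂ → _) := measurable_mul_const g
  have : IsProbabilityMeasure ν := Measure.isProbabilityMeasure_map hmg.aemeasurable
  have : ν.IsHaarMeasure := by
    refine { lt_top_of_isCompact := fun K _ => measure_lt_top ν K,
             map_mul_left_eq_self := ?_, open_pos := ?_ }
    · intro h
      rw [hν, Measure.map_map (measurable_const_mul h) hmg]
      have : ((h * ·) ∘ (· * g)) = ((· * g) ∘ (h * ·)) := by
        funext x; simp [mul_assoc]
      rw [this, ← Measure.map_map hmg (measurable_const_mul h),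
        MeasureTheory.map_mul_left_eq_self μ h]
    · intro U hU hUne
      rw [hν, Measure.map_apply hmg hU.measurableSet]
      refine ((hU.preimage (continuous_mul_right g)).measure_pos μ ?_).ne'
      obtain ⟨x, hx⟩ := hUne
      exact ⟨x * g⁻¹, by simpa using hx⟩
  exact MeasureTheory.Measure.isHaarMeasure_eq_of_isProbabilityMeasure ν μ

/-- the matrix entry of a unitary -/
def ent (i j : Fin d) (U : Matrix.unitaryGroup (Fin d) ℂ) : ℂ :=
  (U : Matrix (Fin d) (Fin d) ℂ) i j

theorem ent_continuous (i j : Fin d) : Continuous (ent (d := d) i j) :=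
  continuous_subtype_val.matrix_elem i j

variable (μ : Measure (Matrix.unitaryGroup (Fin d) ℂ))

theorem integrable_of_continuous [IsProbabilityMeasure μ]
    {f : Matrix.unitaryGroup (Fin d) ℂ → ℂ} (hf : Continuous f) : Integrable f μ := by
  rw [← integrableOn_univ]
  exact hf.continuousOn.integrableOn_compact isCompact_univ

/-- The fourth-order moment integral. -/
def F (i₁ i₂ j₁ j₂ i₁' i₂' j₁' j₂' : Fin d) : ℂ :=
  ∫ U : Matrix.unitaryGroup (Fin d) ℂ,
    ent i₁ j₁ U * ent i₂ j₂ U * conj (ent i₁' j₁' U) * conj (ent i₂' j₂' U) ∂μ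

theorem quad_continuous (i₁ i₂ j₁ j₂ i₁' i₂' j₁' j₂' : Fin d) :
    Continuous (fun U : Matrix.unitaryGroup (Fin d) ℂ =>
      ent i₁ j₁ U * ent i₂ j₂ U * conj (ent i₁' j₁' U) * conj (ent i₂' j₂' U)) :=
  (((ent_continuous i₁ j₁).mul (ent_continuous i₂ j₂)).mul
      (Complex.continuous_conj.comp (ent_continuous i₁' j₁'))).mul
    (Complex.continuous_conj.comp (ent_continuous i₂' j₂'))

theorem integrable_quad [IsProbabilityMeasure μ] (i₁ i₂ j₁ j₂ i₁' i₂' j₁' j₂' : Fin d) :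
    Integrable (fun U : Matrix.unitaryGroup (Fin d) ℂ =>
      ent i₁ j₁ U * ent i₂ j₂ U * conj (ent i₁' j₁' U) * conj (ent i₂' j₂' U)) μ :=
  integrable_of_continuous μ (quad_continuous _ _ _ _ _ _ _ _)

variable [μ.IsHaarMeasure] [IsProbabilityMeasure μ]

theorem integral_left_mul (f : Matrix.unitaryGroup (Fin d) ℂ → ℂ)
    (V : Matrix.unitaryGroup (Fin d) ℂ) :
    ∫ U, f (V * U) ∂μ = ∫ U, f U ∂μ :=
  MeasureTheory.integral_mul_left_eq_self f V

theorem integral_right_mul (f : Matrix.unitaryGroup (Fin d) ℂ → ℂ)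
    (V : Matrix.unitaryGroup (Fin d) ℂ) :
    ∫ U, f (U * V) ∂μ = ∫ U, f U ∂μ := by
  haveI := rightInv μ
  exact MeasureTheory.integral_mul_right_eq_self f V


section Units
variable {d : ℕ}

/-- diagonal unitary from unimodular entries -/
def diagU (z : Fin d → ℂ) (hz : ∀ k, z k * conj (z k) = 1) :
    Matrix.unitaryGroup (Fin d) ℂ :=
  ⟨Matrix.diagonal z, by
    rw [Matrix.mem_unitaryGroup_iff]
    have hstar : star (Matrix.diagonal z) = Matrix.diagonal (fun k => conj (z k)) := by
      simp [Matrix.star_eq_conjTranspose, Matrix.diagonal_conjTranspose]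
    rw [hstar, Matrix.diagonal_mul_diagonal]
    have : (fun k => z k * conj (z k)) = fun _ => (1 : ℂ) := funext fun k => hz k
    rw [this, Matrix.diagonal_one]⟩

theorem ent_diagU_mul (z : Fin d → ℂ) (hz : ∀ k, z k * conj (z k) = 1)
    (U : Matrix.unitaryGroup (Fin d) ℂ) (i j : Fin d) :
    ent i j (diagU z hz * U) = z i * ent i j U := by
  show ((Matrix.diagonal z) * (U : Matrix (Fin d) (Fin d) ℂ)) i j = _
  rw [Matrix.diagonal_mul]
  rfl

theorem ent_mul_diagU (z : Fin d → ℂ) (hz : ∀ k, z k * conj (z k) = 1)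
    (U : Matrix.unitaryGroup (Fin d) ℂ) (i j : Fin d) :
    ent i j (U * diagU z hz) = ent i j U * z j := by
  show ((U : Matrix (Fin d) (Fin d) ℂ) * (Matrix.diagonal z)) i j = _
  rw [Matrix.mul_diagonal]
  rfl

/-- permutation unitary -/
def permU (σ : Equiv.Perm (Fin d)) : Matrix.unitaryGroup (Fin d) ℂ :=
  ⟨σ.permMatrix ℂ, by
    rw [Matrix.mem_unitaryGroup_iff']
    have hstar : star (σ.permMatrix ℂ) = (σ⁻¹).permMatrix ℂ := by
      rw [Matrix.star_eq_conjTranspose]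
      exact Matrix.conjTranspose_permMatrix σ
    rw [hstar]
    show ((σ⁻¹).toPEquiv.toMatrix : Matrix (Fin d) (Fin d) ℂ) * σ.toPEquiv.toMatrix = 1
    rw [PEquiv.toMatrix_toPEquiv_mul]
    ext i j
    simp only [Matrix.submatrix_apply, id_eq, PEquiv.toMatrix_apply, Equiv.toPEquiv_apply,
      Matrix.one_apply, Option.mem_def, Option.some.injEq]
    by_cases h : i = j
    · subst h; simp
    · have : ¬ (σ (σ⁻¹ i) = j) := by simpa using h
      simp [h, this]⟩

theorem ent_permU_mul (σ : Equiv.Perm (Fin d)) (U : Matrix.unitaryGroup (Fin d) ℂ)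
    (i j : Fin d) : ent i j (permU σ * U) = ent (σ i) j U := by
  show ((σ.toPEquiv.toMatrix : Matrix (Fin d) (Fin d) ℂ) * (U : Matrix (Fin d) (Fin d) ℂ)) i j = _
  rw [PEquiv.toMatrix_toPEquiv_mul]
  rfl

theorem ent_mul_permU (σ : Equiv.Perm (Fin d)) (U : Matrix.unitaryGroup (Fin d) ℂ)
    (i j : Fin d) : ent i j (U * permU σ) = ent i (σ⁻¹ j) U := by
  show ((U : Matrix (Fin d) (Fin d) ℂ) * (σ.toPEquiv.toMatrix : Matrix (Fin d) (Fin d) ℂ)) i j = _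
  rw [PEquiv.mul_toMatrix_toPEquiv]
  rfl

end Units


section Invariance
variable {d : ℕ} (μ : Measure (Matrix.unitaryGroup (Fin d) ℂ))
  [μ.IsHaarMeasure] [IsProbabilityMeasure μ]

/-- row phase covariance -/
theorem F_row_scale (z : Fin d → ℂ) (hz : ∀ k, z k * conj (z k) = 1)
    (i₁ i₂ j₁ j₂ i₁' i₂' j₁' j₂' : Fin d) :
    F μ i₁ i₂ j₁ j₂ i₁' i₂' j₁' j₂'
      = (z i₁ * z i₂ * conj (z i₁') * conj (z i₂')) * F μ i₁ i₂ j₁ j₂ i₁' i₂' j₁' j₂' := by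
  conv_lhs => rw [F, ← integral_left_mul μ _ (diagU z hz)]
  simp only [ent_diagU_mul]
  have : ∀ U : Matrix.unitaryGroup (Fin d) ℂ,
      z i₁ * ent i₁ j₁ U * (z i₂ * ent i₂ j₂ U) * conj (z i₁' * ent i₁' j₁' U) *
        conj (z i₂' * ent i₂' j₂' U)
      = (z i₁ * z i₂ * conj (z i₁') * conj (z i₂')) *
        (ent i₁ j₁ U * ent i₂ j₂ U * conj (ent i₁' j₁' U) * conj (ent i₂' j₂' U)) := by
    intro U; simp only [_root_.map_mul]; ring
  simp only [this]
  rw [MeasureTheory.integral_const_mul]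
  rfl

theorem F_col_scale (z : Fin d → ℂ) (hz : ∀ k, z k * conj (z k) = 1)
    (i₁ i₂ j₁ j₂ i₁' i₂' j₁' j₂' : Fin d) :
    F μ i₁ i₂ j₁ j₂ i₁' i₂' j₁' j₂'
      = (z j₁ * z j₂ * conj (z j₁') * conj (z j₂')) * F μ i₁ i₂ j₁ j₂ i₁' i₂' j₁' j₂' := by
  conv_lhs => rw [F, ← integral_right_mul μ _ (diagU z hz)]
  simp only [ent_mul_diagU]
  have : ∀ U : Matrix.unitaryGroup (Fin d) ℂ,
      ent i₁ j₁ U * z j₁ * (ent i₂ j₂ U * z j₂) * conj (ent i₁' j₁' U * z j₁') *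
        conj (ent i₂' j₂' U * z j₂')
      = (z j₁ * z j₂ * conj (z j₁') * conj (z j₂')) *
        (ent i₁ j₁ U * ent i₂ j₂ U * conj (ent i₁' j₁' U) * conj (ent i₂' j₂' U)) := by
    intro U; simp only [_root_.map_mul]; ring
  simp only [this]
  rw [MeasureTheory.integral_const_mul]
  rfl

/-- count of k among a pair -/
def cnt (a b k : Fin d) : ℕ := (if a = k then 1 else 0) + (if b = k then 1 else 0)

theorem F_row_vanish {i₁ i₂ i₁' i₂' : Fin d} (k : Fin d)
    (h : cnt i₁ i₂ k ≠ cnt i₁' i₂' k) (j₁ j₂ j₁' j₂' : Fin d) :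
    F μ i₁ i₂ j₁ j₂ i₁' i₂' j₁' j₂' = 0 := by
  set z : Fin d → ℂ := fun t => if t = k then Complex.I else 1 with hzdef
  have hz : ∀ t, z t * conj (z t) = 1 := by
    intro t
    by_cases ht : t = k <;> simp [hzdef, ht, Complex.conj_I, Complex.I_mul_I]
  have key := F_row_scale μ z hz i₁ i₂ j₁ j₂ i₁' i₂' j₁' j₂'
  have hfac : z i₁ * z i₂ * conj (z i₁') * conj (z i₂') ≠ 1 := by
    simp only [hzdef, cnt] at h ⊢
    by_cases h1 : i₁ = k <;> by_cases h2 : i₂ = k <;> by_cases h3 : i₁' = k <;>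
      by_cases h4 : i₂' = k <;>
      simp only [h1, h2, h3, h4, if_true, if_false, if_pos, if_neg] at h ⊢ <;>
      first
        | omega
        | norm_num [Complex.conj_I, Complex.ext_iff]
  have hzero : (z i₁ * z i₂ * conj (z i₁') * conj (z i₂') - 1)
      * F μ i₁ i₂ j₁ j₂ i₁' i₂' j₁' j₂' = 0 := by linear_combination -key
  rcases mul_eq_zero.mp hzero with h0 | h0
  · exact absurd (sub_eq_zero.mp h0) hfac
  · exact h0

theorem F_col_vanish (i₁ i₂ : Fin d) {j₁ j₂ j₁' j₂' : Fin d} (k : Fin d)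
    (h : cnt j₁ j₂ k ≠ cnt j₁' j₂' k) (i₁' i₂' : Fin d) :
    F μ i₁ i₂ j₁ j₂ i₁' i₂' j₁' j₂' = 0 := by
  set z : Fin d → ℂ := fun t => if t = k then Complex.I else 1 with hzdef
  have hz : ∀ t, z t * conj (z t) = 1 := by
    intro t
    by_cases ht : t = k <;> simp [hzdef, ht, Complex.conj_I, Complex.I_mul_I]
  have key := F_col_scale μ z hz i₁ i₂ j₁ j₂ i₁' i₂' j₁' j₂'
  have hfac : z j₁ * z j₂ * conj (z j₁') * conj (z j₂') ≠ 1 := by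
    simp only [hzdef, cnt] at h ⊢
    by_cases h1 : j₁ = k <;> by_cases h2 : j₂ = k <;> by_cases h3 : j₁' = k <;>
      by_cases h4 : j₂' = k <;>
      simp only [h1, h2, h3, h4, if_true, if_false, if_pos, if_neg] at h ⊢ <;>
      first
        | omega
        | norm_num [Complex.conj_I, Complex.ext_iff]
  have hzero : (z j₁ * z j₂ * conj (z j₁') * conj (z j₂') - 1)
      * F μ i₁ i₂ j₁ j₂ i₁' i₂' j₁' j₂' = 0 := by linear_combination -key
  rcases mul_eq_zero.mp hzero with h0 | h0
  · exact absurd (sub_eq_zero.mp h0) hfac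
  · exact h0

theorem F_row_perm (σ : Equiv.Perm (Fin d)) (i₁ i₂ j₁ j₂ i₁' i₂' j₁' j₂' : Fin d) :
    F μ (σ i₁) (σ i₂) j₁ j₂ (σ i₁') (σ i₂') j₁' j₂' = F μ i₁ i₂ j₁ j₂ i₁' i₂' j₁' j₂' := by
  conv_rhs => rw [F, ← integral_left_mul μ _ (permU σ)]
  simp only [ent_permU_mul]
  rfl

theorem F_col_perm (σ : Equiv.Perm (Fin d)) (i₁ i₂ j₁ j₂ i₁' i₂' j₁' j₂' : Fin d) :
    F μ i₁ i₂ (σ j₁) (σ j₂) i₁' i₂' (σ j₁') (σ j₂') = F μ i₁ i₂ j₁ j₂ i₁' i₂' j₁' j₂' := by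
  conv_rhs => rw [F, ← integral_right_mul μ _ (permU σ⁻¹)]
  simp only [ent_mul_permU]
  simp only [inv_inv]
  rfl

end Invariance


section Orth
variable {d : ℕ}

theorem exists_perm_pair {x y u v : Fin d} (hxy : x ≠ y) (huv : u ≠ v) :
    ∃ σ : Equiv.Perm (Fin d), σ x = u ∧ σ y = v := by
  classical
  set τ := Equiv.swap x u with hτ
  have h1 : τ x = u := Equiv.swap_apply_left x u
  set y' := τ y with hy'
  have hy'u : y' ≠ u := by
    rw [← h1]
    exact fun hh => hxy (τ.injective hh).symm
  refine ⟨τ.trans (Equiv.swap y' v), ?_, ?_⟩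
  · show Equiv.swap y' v (τ x) = u
    rw [h1]
    exact Equiv.swap_apply_of_ne_of_ne (Ne.symm hy'u) huv
  · show Equiv.swap y' v (τ y) = v
    rw [← hy']
    exact Equiv.swap_apply_left y' v

theorem row_orth (U : Matrix.unitaryGroup (Fin d) ℂ) (i i' : Fin d) :
    ∑ j, ent i j U * conj (ent i' j U) = if i = i' then 1 else 0 := by
  have h : ((U : Matrix (Fin d) (Fin d) ℂ) * star (U : Matrix (Fin d) (Fin d) ℂ)) i i'
      = (1 : Matrix (Fin d) (Fin d) ℂ) i i' := by
    rw [U.prop.2]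
  rw [Matrix.mul_apply] at h
  simp only [Matrix.star_apply, Matrix.one_apply] at h
  convert h using 2
  rfl

theorem col_orth (U : Matrix.unitaryGroup (Fin d) ℂ) (j j' : Fin d) :
    ∑ i, conj (ent i j U) * ent i j' U = if j = j' then 1 else 0 := by
  have h : (star (U : Matrix (Fin d) (Fin d) ℂ) * (U : Matrix (Fin d) (Fin d) ℂ)) j j'
      = (1 : Matrix (Fin d) (Fin d) ℂ) j j' := by
    rw [U.prop.1]
  rw [Matrix.mul_apply] at h
  simp only [Matrix.star_apply, Matrix.one_apply] at h
  convert h using 2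
  rfl

end Orth


section Moments
variable {d : ℕ} (μ : Measure (Matrix.unitaryGroup (Fin d) ℂ))
  [μ.IsHaarMeasure] [IsProbabilityMeasure μ]

/-- second moment -/
def M2 (i j : Fin d) : ℂ :=
  ∫ U : Matrix.unitaryGroup (Fin d) ℂ, ent i j U * conj (ent i j U) ∂μ

theorem integrable_M2 (i j : Fin d) :
    Integrable (fun U : Matrix.unitaryGroup (Fin d) ℂ => ent i j U * conj (ent i j U)) μ :=
  integrable_of_continuous μ ((ent_continuous i j).mul
    (Complex.continuous_conj.comp (ent_continuous i j)))

theorem M2_row_perm (σ : Equiv.Perm (Fin d)) (i j : Fin d) :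
    M2 μ (σ i) j = M2 μ i j := by
  conv_rhs => rw [M2, ← integral_left_mul μ _ (permU σ)]
  simp only [ent_permU_mul]
  rfl

theorem M2_col_perm (σ : Equiv.Perm (Fin d)) (i j : Fin d) :
    M2 μ i (σ j) = M2 μ i j := by
  conv_rhs => rw [M2, ← integral_right_mul μ _ (permU σ⁻¹)]
  simp only [ent_mul_permU, inv_inv]
  rfl

theorem M2_all (i j i' j' : Fin d) : M2 μ i j = M2 μ i' j' := by
  have hc := M2_col_perm μ (Equiv.swap j j') i j'
  rw [Equiv.swap_apply_right] at hc
  have hrr := M2_row_perm μ (Equiv.swap i i') i' j'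
  rw [Equiv.swap_apply_right] at hrr
  exact hc.trans hrr

theorem M2_val (i j : Fin d) : M2 μ i j = 1 / (d : ℂ) := by
  have hsum : ∑ j', M2 μ i j' = 1 := by
    simp only [M2]
    rw [← integral_finset_sum _ (fun j' _ => integrable_M2 μ i j')]
    have hpt : ∀ U : Matrix.unitaryGroup (Fin d) ℂ,
        ∑ j', ent i j' U * conj (ent i j' U) = 1 := by
      intro U
      simpa using row_orth U i i
    simp only [hpt]
    simp
  have hall : ∀ j', M2 μ i j' = M2 μ i j := fun j' => M2_all μ i j' i j
  rw [Finset.sum_congr rfl (fun j' _ => hall j'), Finset.sum_const, Finset.card_univ,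
    Fintype.card_fin, nsmul_eq_mul] at hsum
  have hd0 : (d : ℂ) ≠ 0 := Nat.cast_ne_zero.mpr i.pos.ne'
  rw [eq_div_iff hd0]
  linear_combination hsum

theorem F_perm (σ τ : Equiv.Perm (Fin d)) (i₁ i₂ j₁ j₂ i₁' i₂' j₁' j₂' : Fin d) :
    F μ (σ i₁) (σ i₂) (τ j₁) (τ j₂) (σ i₁') (σ i₂') (τ j₁') (τ j₂')
      = F μ i₁ i₂ j₁ j₂ i₁' i₂' j₁' j₂' := by
  rw [F_col_perm μ τ (σ i₁) (σ i₂) j₁ j₂ (σ i₁') (σ i₂') j₁' j₂',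
    F_row_perm μ σ i₁ i₂ j₁ j₂ i₁' i₂' j₁' j₂']

theorem F_swap_conj (i₁ i₂ j₁ j₂ i₁' i₂' j₁' j₂' : Fin d) :
    F μ i₁ i₂ j₁ j₂ i₁' i₂' j₁' j₂' = F μ i₁ i₂ j₁ j₂ i₂' i₁' j₂' j₁' := by
  unfold F
  congr 1
  funext U
  ring

theorem F_all_a (i j i' j' : Fin d) :
    F μ i i j j i i j j = F μ i' i' j' j' i' i' j' j' := by
  have := F_perm μ (Equiv.swap i i') (Equiv.swap j j') i' i' j' j' i' i' j' j'
  rw [Equiv.swap_apply_right, Equiv.swap_apply_right] at this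
  exact this

theorem F_all_b {j₁ j₂ j₁' j₂' : Fin d} (i i' : Fin d) (hj : j₁ ≠ j₂) (hj' : j₁' ≠ j₂') :
    F μ i i j₁ j₂ i i j₁ j₂ = F μ i' i' j₁' j₂' i' i' j₁' j₂' := by
  obtain ⟨τ, hτ1, hτ2⟩ := exists_perm_pair hj' hj
  have := F_perm μ (Equiv.swap i i') τ i' i' j₁' j₂' i' i' j₁' j₂'
  rw [Equiv.swap_apply_right, hτ1, hτ2] at this
  exact this

theorem F_all_b2 {i₁ i₂ i₁' i₂' : Fin d} (hi : i₁ ≠ i₂) (hi' : i₁' ≠ i₂') (j j' : Fin d) :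
    F μ i₁ i₂ j j i₁ i₂ j j = F μ i₁' i₂' j' j' i₁' i₂' j' j' := by
  obtain ⟨σ, hσ1, hσ2⟩ := exists_perm_pair hi' hi
  have := F_perm μ σ (Equiv.swap j j') i₁' i₂' j' j' i₁' i₂' j' j'
  rw [Equiv.swap_apply_right, hσ1, hσ2] at this
  exact this

theorem F_all_c {i₁ i₂ j₁ j₂ i₁' i₂' j₁' j₂' : Fin d} (hi : i₁ ≠ i₂) (hj : j₁ ≠ j₂)
    (hi' : i₁' ≠ i₂') (hj' : j₁' ≠ j₂') :
    F μ i₁ i₂ j₁ j₂ i₁ i₂ j₁ j₂ = F μ i₁' i₂' j₁' j₂' i₁' i₂' j₁' j₂' := by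
  obtain ⟨σ, hσ1, hσ2⟩ := exists_perm_pair hi' hi
  obtain ⟨τ, hτ1, hτ2⟩ := exists_perm_pair hj' hj
  have := F_perm μ σ τ i₁' i₂' j₁' j₂' i₁' i₂' j₁' j₂'
  rw [hσ1, hσ2, hτ1, hτ2] at this
  exact this

theorem F_all_e {i₁ i₂ j₁ j₂ i₁' i₂' j₁' j₂' : Fin d} (hi : i₁ ≠ i₂) (hj : j₁ ≠ j₂)
    (hi' : i₁' ≠ i₂') (hj' : j₁' ≠ j₂') :
    F μ i₁ i₂ j₁ j₂ i₁ i₂ j₂ j₁ = F μ i₁' i₂' j₁' j₂' i₁' i₂' j₂' j₁' := by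
  obtain ⟨σ, hσ1, hσ2⟩ := exists_perm_pair hi' hi
  obtain ⟨τ, hτ1, hτ2⟩ := exists_perm_pair hj' hj
  have := F_perm μ σ τ i₁' i₂' j₁' j₂' i₁' i₂' j₂' j₁'
  rw [hσ1, hσ2, hτ1, hτ2] at this
  exact this

end Moments

section Cnt
variable {d : ℕ}

theorem cnt_cases {a b a' b' : Fin d} (h : ∀ k, cnt a b k = cnt a' b' k) :
    (a = a' ∧ b = b') ∨ (a = b' ∧ b = a') := by
  rcases eq_or_ne a a' with e1 | e1
  · by_cases hbb : b = b'
    · exact Or.inl ⟨e1, hbb⟩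
    · have h4 := h b'
      simp only [cnt, if_neg hbb, if_pos rfl, e1] at h4
      split_ifs at h4 <;> omega
  · have ha : a = b' := by
      by_cases hb' : b' = a
      · exact hb'.symm
      · exfalso
        have h1 := h a
        simp only [cnt, if_pos rfl, if_neg (Ne.symm e1), if_neg hb'] at h1
        split_ifs at h1 <;> omega
    refine Or.inr ⟨ha, ?_⟩
    by_cases hba : b = a'
    · exact hba
    · exfalso
      have h5 := h a'
      simp only [cnt, if_neg e1, if_neg hba, if_pos rfl] at h5
      split_ifs at h5 <;> omega

theorem cnt_congr_aligned {a b a' b' : Fin d} (h1 : a = a') (h2 : b = b') (k : Fin d) :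
    cnt a b k = cnt a' b' k := by subst h1; subst h2; rfl

theorem cnt_congr_swapped {a b a' b' : Fin d} (h1 : a = b') (h2 : b = a') (k : Fin d) :
    cnt a b k = cnt a' b' k := by subst h1; subst h2; simp only [cnt]; exact Nat.add_comm _ _

theorem kdelta_pair_zero {α : Type*} [DecidableEq α] {x x' y y' : α}
    (h : ¬(x = x' ∧ y = y')) : kdelta x x' * kdelta y y' = 0 := by
  by_cases h1 : x = x' <;> by_cases h2 : y = y' <;> simp [kdelta, h1, h2] <;> tauto

end Cnt


section Had
variable {d : ℕ}

theorem sum_two_support {z o : Fin d} (hzo : z ≠ o) {f : Fin d → ℂ}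
    (h : ∀ k, k ≠ z → k ≠ o → f k = 0) : ∑ k, f k = f z + f o := by
  classical
  have hsub : ∑ k, f k = ∑ k ∈ ({z, o} : Finset (Fin d)), f k := by
    refine (Finset.sum_subset (Finset.subset_univ _) (fun x _ hx => ?_)).symm
    simp only [Finset.mem_insert, Finset.mem_singleton, not_or] at hx
    exact h x hx.1 hx.2
  rw [hsub, Finset.sum_pair hzo]

/-- the entry scale of the Hadamard rotation -/
def hs : ℂ := ((Real.sqrt 2)⁻¹ : ℝ)

theorem hs_conj : conj hs = hs := Complex.conj_ofReal _

theorem hs_sq : hs * hs = 1 / 2 := by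
  rw [hs, ← Complex.ofReal_mul, ← mul_inv, Real.mul_self_sqrt (by norm_num : (0:ℝ) ≤ 2)]
  norm_num

/-- Hadamard-type rotation matrix mixing rows z and o -/
def hadM (z o : Fin d) : Matrix (Fin d) (Fin d) ℂ :=
  Matrix.of fun i j =>
    if i = z then (if j = z then hs else if j = o then hs else 0)
    else if i = o then (if j = z then hs else if j = o then -hs else 0)
    else (if i = j then 1 else 0)

theorem hadM_z {z o : Fin d} (hzo : z ≠ o) (k : Fin d) :
    hadM z o z k = if k = z then hs else if k = o then hs else 0 := by
  simp [hadM]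

theorem hadM_o {z o : Fin d} (hzo : z ≠ o) (k : Fin d) :
    hadM z o o k = if k = z then hs else if k = o then -hs else 0 := by
  simp [hadM, Ne.symm hzo]

theorem hadM_other {z o i : Fin d} (hiz : i ≠ z) (hio : i ≠ o) (k : Fin d) :
    hadM z o i k = if i = k then 1 else 0 := by
  simp [hadM, hiz, hio]

theorem hadM_mem {z o : Fin d} (hzo : z ≠ o) : hadM z o ∈ Matrix.unitaryGroup (Fin d) ℂ := by
  have ezz : hadM z o z z = hs := by rw [hadM_z hzo, if_pos rfl]
  have ezo : hadM z o z o = hs := by rw [hadM_z hzo, if_neg (Ne.symm hzo), if_pos rfl]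
  have eoz : hadM z o o z = hs := by rw [hadM_o hzo, if_pos rfl]
  have eoo : hadM z o o o = -hs := by rw [hadM_o hzo, if_neg (Ne.symm hzo), if_pos rfl]
  rw [Matrix.mem_unitaryGroup_iff]
  ext i j
  rw [Matrix.mul_apply, Matrix.one_apply]
  simp only [Matrix.star_apply, Complex.star_def]
  by_cases hiz : i = z <;> by_cases hio : i = o
  · exact absurd (hiz.symm.trans hio) hzo
  · rw [hiz]
    rw [sum_two_support hzo (fun k hk1 hk2 => by rw [hadM_z hzo k]; simp [hk1, hk2])]
    by_cases hjz : j = z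
    · rw [hjz, ezz, ezo, hs_conj, if_pos rfl]
      linear_combination (2:ℂ) * hs_sq
    · by_cases hjo : j = o
      · rw [hjo, ezz, ezo, eoz, eoo, map_neg, hs_conj, if_neg hzo]
        ring
      · rw [ezz, ezo, hadM_other hjz hjo z, hadM_other hjz hjo o, if_neg hjz, if_neg hjo,
          map_zero, if_neg (fun h : z = j => hjz h.symm)]
        ring
  · rw [hio]
    rw [sum_two_support hzo (fun k hk1 hk2 => by rw [hadM_o hzo k]; simp [hk1, hk2])]
    by_cases hjz : j = z
    · rw [hjz, eoz, eoo, ezz, ezo, hs_conj, if_neg (Ne.symm hzo)]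
      ring
    · by_cases hjo : j = o
      · rw [hjo, eoz, eoo, map_neg, hs_conj, if_pos rfl]
        linear_combination (2:ℂ) * hs_sq
      · rw [eoz, eoo, hadM_other hjz hjo z, hadM_other hjz hjo o, if_neg hjz, if_neg hjo,
          map_zero, if_neg (fun h : o = j => hjo h.symm)]
        ring
  · rw [Finset.sum_eq_single i (fun k _ hk => by
        rw [hadM_other hiz hio k, if_neg (Ne.symm hk), zero_mul])
      (fun h => absurd (Finset.mem_univ i) h)]
    rw [hadM_other hiz hio i, if_pos rfl, one_mul]
    by_cases hjz : j = z
    · rw [hjz, hadM_z hzo i, if_neg hiz, if_neg hio, map_zero,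
        if_neg (fun h : i = z => hiz h)]
    · by_cases hjo : j = o
      · rw [hjo, hadM_o hzo i, if_neg hiz, if_neg hio, map_zero,
          if_neg (fun h : i = o => hio h)]
      · rw [hadM_other hjz hjo i]
        by_cases hij : i = j
        · rw [if_pos hij.symm, _root_.map_one, if_pos hij]
        · rw [if_neg (fun h : j = i => hij h.symm), map_zero, if_neg hij]

/-- the Hadamard rotation as a unitary -/
def hadU {z o : Fin d} (hzo : z ≠ o) : Matrix.unitaryGroup (Fin d) ℂ :=
  ⟨hadM z o, hadM_mem hzo⟩

theorem ent_hadU {z o : Fin d} (hzo : z ≠ o) (U : Matrix.unitaryGroup (Fin d) ℂ) (j : Fin d) :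
    ent z j (hadU hzo * U) = hs * (ent z j U + ent o j U) := by
  show ((hadM z o) * (U : Matrix (Fin d) (Fin d) ℂ)) z j = _
  rw [Matrix.mul_apply]
  rw [sum_two_support hzo (fun k hk1 hk2 => by simp [hadM, hk1, hk2])]
  simp [hadM, hzo, Ne.symm hzo, ent]
  ring

end Had


section Values
variable {d : ℕ} (μ : Measure (Matrix.unitaryGroup (Fin d) ℂ))
  [μ.IsHaarMeasure] [IsProbabilityMeasure μ]

theorem sum_split (f : Fin d → ℂ) (c : ℂ) (x : Fin d) (hf : ∀ j, j ≠ x → f j = c) :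
    ∑ j, f j = f x + ((d:ℂ) - 1) * c := by
  rw [← Finset.add_sum_erase _ f (Finset.mem_univ x)]
  congr 1
  rw [Finset.sum_congr rfl (fun j hj => hf j (Finset.ne_of_mem_erase hj)), Finset.sum_const,
    Finset.card_erase_of_mem (Finset.mem_univ x), Finset.card_univ, Fintype.card_fin,
    nsmul_eq_mul]
  have hd1 : 1 ≤ d := x.pos
  have : ((d - 1 : ℕ) : ℂ) = (d : ℂ) - 1 := by push_cast [Nat.cast_sub hd1]; ring
  rw [this]

theorem F_values {z o : Fin d} (hzo : z ≠ o) :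
    F μ z z z z z z z z * ((d:ℂ) * ((d:ℂ) + 1)) = 2
    ∧ F μ z z z o z z z o * ((d:ℂ) * ((d:ℂ) + 1)) = 1
    ∧ F μ z o z z z o z z * ((d:ℂ) * ((d:ℂ) + 1)) = 1
    ∧ F μ z o z o z o z o * ((d:ℂ)^2 - 1) = 1
    ∧ F μ z o z o z o o z * ((d:ℂ) * ((d:ℂ)^2 - 1)) = -1 := by
  have hnt : Nontrivial (Fin d) := ⟨⟨z, o, hzo⟩⟩
  have hd2 : 2 ≤ d := Nat.succ_le_of_lt (by simpa using Fintype.one_lt_card (α := Fin d))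
  have hd0 : (d:ℂ) ≠ 0 := Nat.cast_ne_zero.mpr (by omega)
  have hdm1 : (d:ℂ) - 1 ≠ 0 := by
    rw [sub_ne_zero]
    intro h
    exact absurd (Nat.cast_eq_one.mp h) (by omega)
  have hdp1 : (d:ℂ) + 1 ≠ 0 := by
    have : ((d+1 : ℕ) : ℂ) ≠ 0 := Nat.cast_ne_zero.mpr (by omega)
    push_cast at this
    exact this
  set A := F μ z z z z z z z z with hA
  set B := F μ z z z o z z z o with hB
  set B2 := F μ z o z z z o z z with hB2
  set C := F μ z o z o z o z o with hC
  set E := F μ z o z o z o o z with hE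
  set m := M2 μ z z with hm
  have hdm : (d:ℂ) * m = 1 := by
    rw [hm, M2_val μ z z]
    field_simp
  -- equation E2
  have hsum2 : ∑ j, F μ z z z j z z z j = m := by
    simp only [F, hm, M2]
    rw [← integral_finset_sum _ (fun j _ => integrable_quad μ z z z j z z z j)]
    congr 1
    funext U
    rw [Finset.sum_congr rfl (fun j _ => (show ent z z U * ent z j U * conj (ent z z U) *
          conj (ent z j U)
        = (ent z z U * conj (ent z z U)) * (ent z j U * conj (ent z j U)) by ring)),
      ← Finset.mul_sum, row_orth U z z, if_pos rfl, mul_one]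
  have e2 : A + ((d:ℂ) - 1) * B = m := by
    rw [← hsum2]
    exact (sum_split _ B z (fun j hj =>
      F_all_b μ z z (Ne.symm hj) hzo)).symm
  -- equation E3
  have hsum3 : ∑ i, F μ z i z z z i z z = m := by
    simp only [F, hm, M2]
    rw [← integral_finset_sum _ (fun i _ => integrable_quad μ z i z z z i z z)]
    congr 1
    funext U
    rw [Finset.sum_congr rfl (fun i _ => (show ent z z U * ent i z U * conj (ent z z U) *
          conj (ent i z U)
        = (ent z z U * conj (ent z z U)) * (conj (ent i z U) * ent i z U) by ring)),
      ← Finset.mul_sum, col_orth U z z, if_pos rfl, mul_one]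
  have e3 : A + ((d:ℂ) - 1) * B2 = m := by
    rw [← hsum3]
    exact (sum_split _ B2 z (fun i hi =>
      F_all_b2 μ (Ne.symm hi) hzo z z)).symm
  -- equation E4
  have hsum4 : ∑ j, F μ z o z j z o z j = m := by
    simp only [F, hm, M2]
    rw [← integral_finset_sum _ (fun j _ => integrable_quad μ z o z j z o z j)]
    congr 1
    funext U
    rw [Finset.sum_congr rfl (fun j _ => (show ent z z U * ent o j U * conj (ent z z U) *
          conj (ent o j U)
        = (ent z z U * conj (ent z z U)) * (ent o j U * conj (ent o j U)) by ring)),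
      ← Finset.mul_sum, row_orth U o o, if_pos rfl, mul_one]
  have e4 : B2 + ((d:ℂ) - 1) * C = m := by
    rw [← hsum4]
    exact (sum_split _ C z (fun j hj =>
      F_all_c μ hzo (Ne.symm hj) hzo hzo)).symm
  -- equation E5
  have hsum5 : ∑ j, F μ z o j z z o z j = 0 := by
    simp only [F]
    rw [← integral_finset_sum _ (fun j _ => integrable_quad μ z o j z z o z j)]
    have : ∀ U : Matrix.unitaryGroup (Fin d) ℂ,
        ∑ j, ent z j U * ent o z U * conj (ent z z U) * conj (ent o j U) = 0 := by
      intro U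
      rw [Finset.sum_congr rfl (fun j _ => (show ent z j U * ent o z U * conj (ent z z U) *
            conj (ent o j U)
          = (ent o z U * conj (ent z z U)) * (ent z j U * conj (ent o j U)) by ring)),
        ← Finset.mul_sum, row_orth U z o, if_neg hzo, mul_zero]
    simp only [this]
    simp
  have e5 : B2 + ((d:ℂ) - 1) * E = 0 := by
    rw [← hsum5]
    exact (sum_split _ E z (fun j hj =>
      F_all_e μ hzo hj hzo hzo)).symm
  -- equation E6 : A = 2 * B2, via the Hadamard rotation
  have hs4 : hs * hs * hs * hs = 1 / 4 := by
    rw [show hs * hs * hs * hs = (hs * hs) * (hs * hs) by ring, hs_sq]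
    norm_num
  have e6 : A = 2 * B2 := by
    have hrot := integral_left_mul μ
      (fun W => ent z z W * ent z z W * conj (ent z z W) * conj (ent z z W)) (hadU hzo)
    have hFA : (∫ U, (fun W => ent z z W * ent z z W * conj (ent z z W) * conj (ent z z W))
        U ∂μ) = A := rfl
    have hpt : ∀ U, (fun W => ent z z W * ent z z W * conj (ent z z W) * conj (ent z z W))
        (hadU hzo * U)
        = hs * hs * hs * hs *
          (ent z z U * ent z z U * conj (ent z z U) * conj (ent z z U)
          + ((2:ℂ) * (ent z z U * ent z z U * conj (ent z z U) * conj (ent o z U))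
          + (ent z z U * ent z z U * conj (ent o z U) * conj (ent o z U)
          + ((2:ℂ) * (ent z z U * ent o z U * conj (ent z z U) * conj (ent z z U))
          + ((4:ℂ) * (ent z z U * ent o z U * conj (ent z z U) * conj (ent o z U))
          + ((2:ℂ) * (ent z z U * ent o z U * conj (ent o z U) * conj (ent o z U))
          + (ent o z U * ent o z U * conj (ent z z U) * conj (ent z z U)
          + ((2:ℂ) * (ent o z U * ent o z U * conj (ent z z U) * conj (ent o z U))
          + (ent o z U * ent o z U * conj (ent o z U) * conj (ent o z U)))))))))) := by
      intro U
      simp only [ent_hadU hzo U z, _root_.map_mul, map_add, hs_conj]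
      ring
    have i1 := integrable_quad μ z z z z z z z z
    have i2 := (integrable_quad μ z z z z z o z z).const_mul (2:ℂ)
    have i3 := integrable_quad μ z z z z o o z z
    have i4 := (integrable_quad μ z o z z z z z z).const_mul (2:ℂ)
    have i5 := (integrable_quad μ z o z z z o z z).const_mul (4:ℂ)
    have i6 := (integrable_quad μ z o z z o o z z).const_mul (2:ℂ)
    have i7 := integrable_quad μ o o z z z z z z
    have i8 := (integrable_quad μ o o z z z o z z).const_mul (2:ℂ)
    have i9 := integrable_quad μ o o z z o o z z
    have s9 : Integrable (fun U : Matrix.unitaryGroup (Fin d) ℂ =>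
        ent o z U * ent o z U * conj (ent o z U) * conj (ent o z U)) μ := i9
    have s8 : Integrable (fun U : Matrix.unitaryGroup (Fin d) ℂ =>
        (2:ℂ) * (ent o z U * ent o z U * conj (ent z z U) * conj (ent o z U))
          + (ent o z U * ent o z U * conj (ent o z U) * conj (ent o z U))) μ := i8.add s9
    have s7 : Integrable (fun U : Matrix.unitaryGroup (Fin d) ℂ =>
        ent o z U * ent o z U * conj (ent z z U) * conj (ent z z U)
          + ((2:ℂ) * (ent o z U * ent o z U * conj (ent z z U) * conj (ent o z U))
          + (ent o z U * ent o z U * conj (ent o z U) * conj (ent o z U)))) μ := i7.add s8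
    have s6 : Integrable (fun U : Matrix.unitaryGroup (Fin d) ℂ =>
        (2:ℂ) * (ent z z U * ent o z U * conj (ent o z U) * conj (ent o z U))
          + (ent o z U * ent o z U * conj (ent z z U) * conj (ent z z U)
          + ((2:ℂ) * (ent o z U * ent o z U * conj (ent z z U) * conj (ent o z U))
          + (ent o z U * ent o z U * conj (ent o z U) * conj (ent o z U))))) μ := i6.add s7
    have s5 : Integrable (fun U : Matrix.unitaryGroup (Fin d) ℂ =>
        (4:ℂ) * (ent z z U * ent o z U * conj (ent z z U) * conj (ent o z U))
          + ((2:ℂ) * (ent z z U * ent o z U * conj (ent o z U) * conj (ent o z U))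
          + (ent o z U * ent o z U * conj (ent z z U) * conj (ent z z U)
          + ((2:ℂ) * (ent o z U * ent o z U * conj (ent z z U) * conj (ent o z U))
          + (ent o z U * ent o z U * conj (ent o z U) * conj (ent o z U)))))) μ := i5.add s6
    have s4 : Integrable (fun U : Matrix.unitaryGroup (Fin d) ℂ =>
        (2:ℂ) * (ent z z U * ent o z U * conj (ent z z U) * conj (ent z z U))
          + ((4:ℂ) * (ent z z U * ent o z U * conj (ent z z U) * conj (ent o z U))
          + ((2:ℂ) * (ent z z U * ent o z U * conj (ent o z U) * conj (ent o z U))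
          + (ent o z U * ent o z U * conj (ent z z U) * conj (ent z z U)
          + ((2:ℂ) * (ent o z U * ent o z U * conj (ent z z U) * conj (ent o z U))
          + (ent o z U * ent o z U * conj (ent o z U) * conj (ent o z U))))))) μ := i4.add s5
    have s3 : Integrable (fun U : Matrix.unitaryGroup (Fin d) ℂ =>
        ent z z U * ent z z U * conj (ent o z U) * conj (ent o z U)
          + ((2:ℂ) * (ent z z U * ent o z U * conj (ent z z U) * conj (ent z z U))
          + ((4:ℂ) * (ent z z U * ent o z U * conj (ent z z U) * conj (ent o z U))
          + ((2:ℂ) * (ent z z U * ent o z U * conj (ent o z U) * conj (ent o z U))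
          + (ent o z U * ent o z U * conj (ent z z U) * conj (ent z z U)
          + ((2:ℂ) * (ent o z U * ent o z U * conj (ent z z U) * conj (ent o z U))
          + (ent o z U * ent o z U * conj (ent o z U) * conj (ent o z U)))))))) μ := i3.add s4
    have s2 : Integrable (fun U : Matrix.unitaryGroup (Fin d) ℂ =>
        (2:ℂ) * (ent z z U * ent z z U * conj (ent z z U) * conj (ent o z U))
          + (ent z z U * ent z z U * conj (ent o z U) * conj (ent o z U)
          + ((2:ℂ) * (ent z z U * ent o z U * conj (ent z z U) * conj (ent z z U))
          + ((4:ℂ) * (ent z z U * ent o z U * conj (ent z z U) * conj (ent o z U))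
          + ((2:ℂ) * (ent z z U * ent o z U * conj (ent o z U) * conj (ent o z U))
          + (ent o z U * ent o z U * conj (ent z z U) * conj (ent z z U)
          + ((2:ℂ) * (ent o z U * ent o z U * conj (ent z z U) * conj (ent o z U))
          + (ent o z U * ent o z U * conj (ent o z U) * conj (ent o z U))))))))) μ := i2.add s3
    have hint : (∫ U, (fun W => ent z z W * ent z z W * conj (ent z z W) * conj (ent z z W))
        (hadU hzo * U) ∂μ)
        = hs * hs * hs * hs *
          ((∫ U, ent z z U * ent z z U * conj (ent z z U) * conj (ent z z U) ∂μ)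
          + ((2:ℂ) * (∫ U, ent z z U * ent z z U * conj (ent z z U) * conj (ent o z U) ∂μ)
          + ((∫ U, ent z z U * ent z z U * conj (ent o z U) * conj (ent o z U) ∂μ)
          + ((2:ℂ) * (∫ U, ent z z U * ent o z U * conj (ent z z U) * conj (ent z z U) ∂μ)
          + ((4:ℂ) * (∫ U, ent z z U * ent o z U * conj (ent z z U) * conj (ent o z U) ∂μ)
          + ((2:ℂ) * (∫ U, ent z z U * ent o z U * conj (ent o z U) * conj (ent o z U) ∂μ)
          + ((∫ U, ent o z U * ent o z U * conj (ent z z U) * conj (ent z z U) ∂μ)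
          + ((2:ℂ) * (∫ U, ent o z U * ent o z U * conj (ent z z U) * conj (ent o z U) ∂μ)
          + ((∫ U, ent o z U * ent o z U * conj (ent o z U) * conj (ent o z U) ∂μ)))))))))) := by
      rw [integral_congr_ae (Filter.Eventually.of_forall hpt),
        MeasureTheory.integral_const_mul]
      congr 1
      rw [integral_add i1 s2, integral_add i2 s3, integral_add i3 s4, integral_add i4 s5, integral_add i5 s6, integral_add i6 s7, integral_add i7 s8, integral_add i8 s9]
      simp only [MeasureTheory.integral_const_mul]
    have hv2 : (∫ U, ent z z U * ent z z U * conj (ent z z U) * conj (ent o z U) ∂μ) = 0 :=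
      F_row_vanish μ o (by simp [cnt, hzo, Ne.symm hzo]) z z z z
    have hv3 : (∫ U, ent z z U * ent z z U * conj (ent o z U) * conj (ent o z U) ∂μ) = 0 :=
      F_row_vanish μ o (by simp [cnt, hzo, Ne.symm hzo]) z z z z
    have hv4 : (∫ U, ent z z U * ent o z U * conj (ent z z U) * conj (ent z z U) ∂μ) = 0 :=
      F_row_vanish μ o (by simp [cnt, hzo, Ne.symm hzo]) z z z z
    have hv6 : (∫ U, ent z z U * ent o z U * conj (ent o z U) * conj (ent o z U) ∂μ) = 0 :=
      F_row_vanish μ o (by simp [cnt, hzo, Ne.symm hzo]) z z z z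
    have hv7 : (∫ U, ent o z U * ent o z U * conj (ent z z U) * conj (ent z z U) ∂μ) = 0 :=
      F_row_vanish μ o (by simp [cnt, hzo, Ne.symm hzo]) z z z z
    have hv8 : (∫ U, ent o z U * ent o z U * conj (ent z z U) * conj (ent o z U) ∂μ) = 0 :=
      F_row_vanish μ o (by simp [cnt, hzo, Ne.symm hzo]) z z z z
    have hv1 : (∫ U, ent z z U * ent z z U * conj (ent z z U) * conj (ent z z U) ∂μ) = A := rfl
    have hv5 : (∫ U, ent z z U * ent o z U * conj (ent z z U) * conj (ent o z U) ∂μ) = B2 := rfl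
    have hv9 : (∫ U, ent o z U * ent o z U * conj (ent o z U) * conj (ent o z U) ∂μ) = A := F_all_a μ o z z z
    rw [hint, hv1, hv2, hv3, hv4, hv5, hv6, hv7, hv8, hv9, hs4] at hrot
    linear_combination (-2 : ℂ) * hrot
  -- final algebra
  have hB2v : B2 * ((d:ℂ) * ((d:ℂ) + 1)) = 1 := by
    linear_combination (d:ℂ) * e3 - (d:ℂ) * e6 + hdm
  have hAv : A * ((d:ℂ) * ((d:ℂ) + 1)) = 2 := by
    linear_combination ((d:ℂ) * ((d:ℂ)+1)) * e6 + 2 * hB2v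
  have hBeqB2 : B = B2 := by
    have hz : ((d:ℂ) - 1) * (B - B2) = 0 := by linear_combination e2 - e3
    rcases mul_eq_zero.mp hz with h | h
    · exact absurd h hdm1
    · exact sub_eq_zero.mp h
  have hBv : B * ((d:ℂ) * ((d:ℂ) + 1)) = 1 := by rw [hBeqB2]; exact hB2v
  have hCv : C * ((d:ℂ)^2 - 1) = 1 := by
    have h : (d:ℂ) * (C * ((d:ℂ)^2 - 1)) = (d:ℂ) * 1 := by
      linear_combination ((d:ℂ) * ((d:ℂ)+1)) * e4 - hB2v + ((d:ℂ)+1) * hdm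
    exact mul_left_cancel₀ hd0 h
  have hEv : E * ((d:ℂ) * ((d:ℂ)^2 - 1)) = -1 := by
    linear_combination ((d:ℂ) * ((d:ℂ)+1)) * e5 - hB2v
  exact ⟨hAv, hBv, hB2v, hCv, hEv⟩

end Values

end WgAux

open WgAux in
/-- **Second-moment Weingarten formula** for the unitary group, with
`Wg(id) = 1/(d²−1)` and `Wg(transposition) = −1/(d(d²−1))`. -/
theorem weingarten_second_moment (d : ℕ) (hd : 2 ≤ d)
    (i₁ i₂ j₁ j₂ i₁' i₂' j₁' j₂' : Fin d)
    (μ : Measure (Matrix.unitaryGroup (Fin d) ℂ))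
    [μ.IsHaarMeasure] [IsProbabilityMeasure μ] :
    ∫ U : Matrix.unitaryGroup (Fin d) ℂ,
        (U : Matrix (Fin d) (Fin d) ℂ) i₁ j₁ * (U : Matrix (Fin d) (Fin d) ℂ) i₂ j₂ *
          conj ((U : Matrix (Fin d) (Fin d) ℂ) i₁' j₁') *
          conj ((U : Matrix (Fin d) (Fin d) ℂ) i₂' j₂') ∂μ
      = (kdelta i₁ i₁' * kdelta i₂ i₂' * kdelta j₁ j₁' * kdelta j₂ j₂'
            + kdelta i₁ i₂' * kdelta i₂ i₁' * kdelta j₁ j₂' * kdelta j₂ j₁')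
            / ((d : ℂ) ^ 2 - 1)
        - (kdelta i₁ i₁' * kdelta i₂ i₂' * kdelta j₁ j₂' * kdelta j₂ j₁'
            + kdelta i₁ i₂' * kdelta i₂ i₁' * kdelta j₁ j₁' * kdelta j₂ j₂')
            / ((d : ℂ) * ((d : ℂ) ^ 2 - 1)) := by
  classical
  have hd0 : (d:ℂ) ≠ 0 := Nat.cast_ne_zero.mpr (by omega)
  have hdm1 : (d:ℂ) - 1 ≠ 0 := by
    rw [sub_ne_zero]
    intro h
    exact absurd (Nat.cast_eq_one.mp h) (by omega)
  have hdp1 : (d:ℂ) + 1 ≠ 0 := by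
    have : ((d+1:ℕ):ℂ) ≠ 0 := Nat.cast_ne_zero.mpr (by omega)
    push_cast at this
    exact this
  have hsq : (d:ℂ)^2 - 1 ≠ 0 := by
    have h2 : (d:ℂ)^2 - 1 = ((d:ℂ) - 1) * ((d:ℂ)+1) := by ring
    rw [h2]
    exact mul_ne_zero hdm1 hdp1
  set c0 : Fin d := ⟨0, by omega⟩ with hc0
  set c1 : Fin d := ⟨1, by omega⟩ with hc1
  have hc01 : c0 ≠ c1 := by simp [hc0, hc1, Fin.ext_iff]
  obtain ⟨hAv, hBv, hB2v, hCv, hEv⟩ := F_values μ hc01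
  have vA : F μ c0 c0 c0 c0 c0 c0 c0 c0 = 2 / ((d:ℂ) * ((d:ℂ) + 1)) := by
    rw [eq_div_iff (mul_ne_zero hd0 hdp1)]; exact hAv
  have vB : F μ c0 c0 c0 c1 c0 c0 c0 c1 = 1 / ((d:ℂ) * ((d:ℂ) + 1)) := by
    rw [eq_div_iff (mul_ne_zero hd0 hdp1)]; exact hBv
  have vB2 : F μ c0 c1 c0 c0 c0 c1 c0 c0 = 1 / ((d:ℂ) * ((d:ℂ) + 1)) := by
    rw [eq_div_iff (mul_ne_zero hd0 hdp1)]; exact hB2v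
  have vC : F μ c0 c1 c0 c1 c0 c1 c0 c1 = 1 / ((d:ℂ)^2 - 1) := by
    rw [eq_div_iff hsq]; exact hCv
  have vE : F μ c0 c1 c0 c1 c0 c1 c1 c0 = -1 / ((d:ℂ) * ((d:ℂ)^2 - 1)) := by
    rw [eq_div_iff (mul_ne_zero hd0 hsq)]
    exact hEv
  show F μ i₁ i₂ j₁ j₂ i₁' i₂' j₁' j₂' = _
  by_cases hr : ∀ k, cnt i₁ i₂ k = cnt i₁' i₂' k
  · by_cases hcc : ∀ k, cnt j₁ j₂ k = cnt j₁' j₂' k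
    · rcases cnt_cases hr with ⟨h1, h2⟩ | ⟨h1, h2⟩ <;>
        rcases cnt_cases hcc with ⟨g1, g2⟩ | ⟨g1, g2⟩
      · -- rows aligned, cols aligned
        subst h1; subst h2; subst g1; subst g2
        by_cases hi : i₁ = i₂ <;> by_cases hj : j₁ = j₂
        · subst hi; subst hj
          rw [F_all_a μ i₁ j₁ c0 c0, vA]
          simp only [kdelta, if_pos rfl, if_true]
          field_simp
          ring
        · subst hi
          rw [F_all_b μ i₁ c0 hj hc01, vB]
          simp only [kdelta, if_pos rfl, if_true, if_neg hj, if_neg (Ne.symm hj)]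
          field_simp
          ring
        · subst hj
          rw [F_all_b2 μ hi hc01 j₁ c0, vB2]
          simp only [kdelta, if_pos rfl, if_true, if_neg hi, if_neg (Ne.symm hi)]
          field_simp
          ring
        · rw [F_all_c μ hi hj hc01 hc01, vC]
          simp only [kdelta, if_pos rfl, if_true, if_neg hi, if_neg (Ne.symm hi), if_neg hj,
            if_neg (Ne.symm hj)]
          field_simp
          ring
      · -- rows aligned, cols swapped
        subst h1; subst h2; subst g1; subst g2
        by_cases hj : j₁ = j₂
        · subst hj
          by_cases hi : i₁ = i₂
          · subst hi
            rw [F_all_a μ i₁ j₁ c0 c0, vA]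
            simp only [kdelta, if_pos rfl, if_true]
            field_simp
            ring
          · rw [F_all_b2 μ hi hc01 j₁ c0, vB2]
            simp only [kdelta, if_pos rfl, if_true, if_neg hi, if_neg (Ne.symm hi)]
            field_simp
            ring
        · by_cases hi : i₁ = i₂
          · subst hi
            rw [F_swap_conj μ i₁ i₁ j₁ j₂ i₁ i₁ j₂ j₁,
              F_all_b μ i₁ c0 hj hc01, vB]
            simp only [kdelta, if_pos rfl, if_true, if_neg hj, if_neg (Ne.symm hj)]
            field_simp
            ring
          · rw [F_all_e μ hi hj hc01 hc01, vE]
            simp only [kdelta, if_pos rfl, if_true, if_neg hi, if_neg (Ne.symm hi), if_neg hj,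
              if_neg (Ne.symm hj)]
            field_simp
            ring
      · -- rows swapped, cols aligned
        subst h1; subst h2; subst g1; subst g2
        by_cases hi : i₁ = i₂
        · subst hi
          by_cases hj : j₁ = j₂
          · subst hj
            rw [F_all_a μ i₁ j₁ c0 c0, vA]
            simp only [kdelta, if_pos rfl, if_true]
            field_simp
            ring
          · rw [F_all_b μ i₁ c0 hj hc01, vB]
            simp only [kdelta, if_pos rfl, if_true, if_neg hj, if_neg (Ne.symm hj)]
            field_simp
            ring
        · by_cases hj : j₁ = j₂
          · subst hj
            rw [F_swap_conj μ i₁ i₂ j₁ j₁ i₂ i₁ j₁ j₁,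
              F_all_b2 μ hi hc01 j₁ c0, vB2]
            simp only [kdelta, if_pos rfl, if_true, if_neg hi, if_neg (Ne.symm hi)]
            field_simp
            ring
          · rw [F_swap_conj μ i₁ i₂ j₁ j₂ i₂ i₁ j₁ j₂,
              F_all_e μ hi hj hc01 hc01, vE]
            simp only [kdelta, if_pos rfl, if_true, if_neg hi, if_neg (Ne.symm hi), if_neg hj,
              if_neg (Ne.symm hj)]
            field_simp
            ring
      · -- rows swapped, cols swapped
        subst h1; subst h2; subst g1; subst g2
        by_cases hi : i₁ = i₂
        · subst hi
          by_cases hj : j₁ = j₂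
          · subst hj
            rw [F_all_a μ i₁ j₁ c0 c0, vA]
            simp only [kdelta, if_pos rfl, if_true]
            field_simp
            ring
          · rw [F_swap_conj μ i₁ i₁ j₁ j₂ i₁ i₁ j₂ j₁,
              F_all_b μ i₁ c0 hj hc01, vB]
            simp only [kdelta, if_pos rfl, if_true, if_neg hj, if_neg (Ne.symm hj)]
            field_simp
            ring
        · by_cases hj : j₁ = j₂
          · subst hj
            rw [F_swap_conj μ i₁ i₂ j₁ j₁ i₂ i₁ j₁ j₁,
              F_all_b2 μ hi hc01 j₁ c0, vB2]
            simp only [kdelta, if_pos rfl, if_true, if_neg hi, if_neg (Ne.symm hi)]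
            field_simp
            ring
          · rw [F_swap_conj μ i₁ i₂ j₁ j₂ i₂ i₁ j₂ j₁,
              F_all_c μ hi hj hc01 hc01, vC]
            simp only [kdelta, if_pos rfl, if_true, if_neg hi, if_neg (Ne.symm hi), if_neg hj,
              if_neg (Ne.symm hj)]
            field_simp
            ring
    · -- columns mismatch
      push_neg at hcc
      obtain ⟨k, hk⟩ := hcc
      rw [F_col_vanish μ i₁ i₂ k hk i₁' i₂']
      have e1 : kdelta j₁ j₁' * kdelta j₂ j₂' = 0 :=
        kdelta_pair_zero (fun h => hk (cnt_congr_aligned h.1 h.2 k))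
      have e2 : kdelta j₁ j₂' * kdelta j₂ j₁' = 0 :=
        kdelta_pair_zero (fun h => hk (cnt_congr_swapped h.1 h.2 k))
      have z1 : kdelta i₁ i₁' * kdelta i₂ i₂' * kdelta j₁ j₁' * kdelta j₂ j₂' = 0 := by
        rw [mul_assoc (kdelta i₁ i₁' * kdelta i₂ i₂'), e1, mul_zero]
      have z2 : kdelta i₁ i₂' * kdelta i₂ i₁' * kdelta j₁ j₂' * kdelta j₂ j₁' = 0 := by
        rw [mul_assoc (kdelta i₁ i₂' * kdelta i₂ i₁'), e2, mul_zero]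
      have z3 : kdelta i₁ i₁' * kdelta i₂ i₂' * kdelta j₁ j₂' * kdelta j₂ j₁' = 0 := by
        rw [mul_assoc (kdelta i₁ i₁' * kdelta i₂ i₂'), e2, mul_zero]
      have z4 : kdelta i₁ i₂' * kdelta i₂ i₁' * kdelta j₁ j₁' * kdelta j₂ j₂' = 0 := by
        rw [mul_assoc (kdelta i₁ i₂' * kdelta i₂ i₁'), e1, mul_zero]
      rw [z1, z2, z3, z4]
      simp
  · -- rows mismatch
    push_neg at hr
    obtain ⟨k, hk⟩ := hr
    rw [F_row_vanish μ k hk]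
    have e1 : kdelta i₁ i₁' * kdelta i₂ i₂' = 0 :=
      kdelta_pair_zero (fun h => hk (cnt_congr_aligned h.1 h.2 k))
    have e2 : kdelta i₁ i₂' * kdelta i₂ i₁' = 0 :=
      kdelta_pair_zero (fun h => hk (cnt_congr_swapped h.1 h.2 k))
    have z1 : kdelta i₁ i₁' * kdelta i₂ i₂' * kdelta j₁ j₁' * kdelta j₂ j₂' = 0 := by
      rw [e1, zero_mul, zero_mul]
    have z2 : kdelta i₁ i₂' * kdelta i₂ i₁' * kdelta j₁ j₂' * kdelta j₂ j₁' = 0 := by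
      rw [e2, zero_mul, zero_mul]
    have z3 : kdelta i₁ i₁' * kdelta i₂ i₂' * kdelta j₁ j₂' * kdelta j₂ j₁' = 0 := by
      rw [e1, zero_mul, zero_mul]
    have z4 : kdelta i₁ i₂' * kdelta i₂ i₁' * kdelta j₁ j₁' * kdelta j₂ j₂' = 0 := by
      rw [e2, zero_mul, zero_mul]
    rw [z1, z2, z3, z4]
    simp
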